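/- Let r ≥ 1, with r even if 𝔽 = ℝ, and set m = 2^r. If {B_k}_{k∈K} is a maximal collection of mutually unbiased bases of 𝔽^m, so |K| = k_𝔽(m), then the family F = { P_J^{(k)} : k ∈ K, J ∈ 𝕊_r }, where P_J^{(k)} is the J-coordinate projection with respect to B_k and 𝕊_r is the block collection determined by the columns of S_r, is a tight maximal orthoplectic fusion frame: F consists of n = 2·d_𝔽(m) orthogonal projections of rank m/2 on 𝔽^m, the projections sum to a positive multiple of the identity, and tr(P P') ≤ m/4 for every pair of distinct projections P, P' in F, with max over distinct pairs equal to m/4 = (m/2)²/m. -/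

import Mathlib

open Matrix

noncomputable section

variable {𝕜 : Type*} [RCLike 𝕜]

open scoped Classical in
/-- `d_𝔽(m)`: `(m+2)(m-1)/2` in the real case, `m² - 1` in the complex case. -/
noncomputable def dF (𝕜 : Type*) [RCLike 𝕜] (m : ℕ) : ℕ :=
  if (RCLike.I : 𝕜) = 0 then (m + 2) * (m - 1) / 2 else m ^ 2 - 1

/-- swap `2i ↔ 2i+1` -/
def pairFlip (j : ℕ) : ℕ := if j % 2 = 0 then j + 1 else j - 1

/-- the entries of the recursively defined incidence matrices `S_r`
(`Sfun r a b` is the `(a,b)` entry of `S_r`, for `a < 2^r`, `b < 2^(r+1) - 2`) -/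
def Sfun : ℕ → ℕ → ℕ → ℚ
  | 0, _, _ => 0
  | 1, a, b => if a = b then 1 else 0
  | r + 2, a, b =>
    if b = 0 then (if a < 2 ^ (r + 1) then 1 else 0)
    else if b = 1 then (if a < 2 ^ (r + 1) then 0 else 1)
    else if b < 2 ^ (r + 2) then Sfun (r + 1) (a % 2 ^ (r + 1)) (b - 2)
    else if a < 2 ^ (r + 1) then Sfun (r + 1) a (b - 2 ^ (r + 2))
    else Sfun (r + 1) (a - 2 ^ (r + 1)) (pairFlip (b - 2 ^ (r + 2)))

/-- the matrix `S_r`, a `2^r × (2^(r+1) - 2)` matrix with rational (0-1) entries -/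
def S (r : ℕ) : Matrix (Fin (2 ^ r)) (Fin (2 ^ (r + 1) - 2)) ℚ :=
  Matrix.of fun a b => Sfun r a b

/-- the block determined by the `b`-th column of `S_r` -/
def blockOf (r : ℕ) (b : Fin (2 ^ (r + 1) - 2)) : Finset (Fin (2 ^ r)) :=
  {a : Fin (2 ^ r) | S r a b = 1}


open Finset

lemma pairFlip_invol (b : ℕ) : pairFlip (pairFlip b) = b := by
  by_cases h : b % 2 = 0
  · have h2 : (b+1) % 2 = 1 := by omega
    simp [pairFlip, h, h2]
  · have h1 : (b-1) % 2 = 0 := by omega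
    simp only [pairFlip, if_neg h, if_pos h1]
    omega

lemma pairFlip_inj : Function.Injective pairFlip :=
  Function.LeftInverse.injective pairFlip_invol

lemma pairFlip_lt {n b : ℕ} (hn : n % 2 = 0) (h : b < n) : pairFlip b < n := by
  unfold pairFlip
  split <;> omega

lemma pairFlip_ne (b : ℕ) : pairFlip b ≠ b := by
  unfold pairFlip; split <;> omega

/-- column support of `S r` as a finset of naturals -/
def colS (r b : ℕ) : Finset ℕ := (range (2 ^ r)).filter (fun a => Sfun r a b = 1)

lemma col_subset (r b : ℕ) : colS r b ⊆ range (2 ^ r) := filter_subset _ _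

def shiftEmb (N : ℕ) : ℕ ↪ ℕ := ⟨(· + N), add_left_injective N⟩

lemma mem_shiftEmb_map {N a : ℕ} {X : Finset ℕ} :
    a ∈ X.map (shiftEmb N) ↔ N ≤ a ∧ a - N ∈ X := by
  simp only [mem_map, shiftEmb, Function.Embedding.coeFn_mk]
  constructor
  · rintro ⟨c, hc, rfl⟩; exact ⟨Nat.le_add_left _ _, by simpa using hc⟩
  · rintro ⟨h1, h2⟩; exact ⟨a - N, h2, by omega⟩

lemma disj_shift {N : ℕ} {X Y : Finset ℕ} (hX : X ⊆ range N) :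
    Disjoint X (Y.map (shiftEmb N)) := by
  rw [Finset.disjoint_left]
  intro a ha hmem
  have h1 := mem_range.mp (hX ha)
  have h2 := (mem_shiftEmb_map.mp hmem).1
  omega

lemma card_union_shift {N : ℕ} {X Y : Finset ℕ} (hX : X ⊆ range N) :
    (X ∪ Y.map (shiftEmb N)).card = X.card + Y.card := by
  rw [card_union_of_disjoint (disj_shift hX), card_map]

lemma inter_union_shift {N : ℕ} {X1 X2 Y1 Y2 : Finset ℕ}
    (hX : X1 ⊆ range N) (hY : Y1 ⊆ range N) :
    (X1 ∪ X2.map (shiftEmb N)) ∩ (Y1 ∪ Y2.map (shiftEmb N)) =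
      (X1 ∩ Y1) ∪ (X2 ∩ Y2).map (shiftEmb N) := by
  ext a
  simp only [mem_inter, mem_union, mem_shiftEmb_map]
  constructor
  · rintro ⟨h1 | h1, h2 | h2⟩
    · exact Or.inl ⟨h1, h2⟩
    · exact absurd (mem_range.mp (hX h1)) (by omega)
    · exact absurd (mem_range.mp (hY h2)) (by omega)
    · exact Or.inr ⟨h1.1, h1.2, h2.2⟩
  · rintro (⟨h1, h2⟩ | ⟨h0, h1, h2⟩)
    · exact ⟨Or.inl h1, Or.inl h2⟩
    · exact ⟨Or.inr ⟨h0, h1⟩, Or.inr ⟨h0, h2⟩⟩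

lemma col_step_zero (n : ℕ) : colS (n+2) 0 = range (2^(n+1)) := by
  ext a
  simp only [colS, mem_filter, mem_range, Sfun, if_pos rfl]
  have h : (2:ℕ)^(n+1) < 2^(n+2) := by
    have := Nat.one_lt_two_pow (n := n+2) (by omega)
    exact Nat.pow_lt_pow_right one_lt_two (by omega)
  constructor
  · rintro ⟨h1, h2⟩
    by_cases hc : a < 2^(n+1)
    · exact hc
    · simp [hc] at h2
  · intro h1
    exact ⟨by omega, by simp [h1]⟩

lemma col_step_one (n : ℕ) : colS (n+2) 1 = (range (2^(n+1))).map (shiftEmb (2^(n+1))) := by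
  ext a
  have h : (2:ℕ)^(n+2) = 2 * 2^(n+1) := by ring
  simp only [colS, mem_filter, mem_range, mem_shiftEmb_map]
  by_cases hc : a < 2^(n+1) <;>
    simp [Sfun, hc] <;> omega

lemma col_step_ii (n b : ℕ) (hb2 : 2 ≤ b) (hb : b < 2^(n+2)) :
    colS (n+2) b = colS (n+1) (b-2) ∪ (colS (n+1) (b-2)).map (shiftEmb (2^(n+1))) := by
  ext a
  have hb0 : b ≠ 0 := by omega
  have hb1 : b ≠ 1 := by omega
  have hNN : (2:ℕ)^(n+2) = 2*2^(n+1) := by ring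
  simp only [colS, mem_filter, mem_range, mem_union, mem_shiftEmb_map, Sfun,
    if_neg hb0, if_neg hb1, if_pos hb]
  by_cases hc : a < 2^(n+1)
  · rw [Nat.mod_eq_of_lt hc]
    constructor
    · rintro ⟨h1, h2⟩; exact Or.inl ⟨hc, h2⟩
    · rintro (⟨_, h2⟩ | ⟨h0, _⟩)
      · exact ⟨by omega, h2⟩
      · omega
  · constructor
    · rintro ⟨h1, h2⟩
      have hmod : a % 2^(n+1) = a - 2^(n+1) := by
        rw [Nat.mod_eq_sub_mod (le_of_not_gt hc)]
        exact Nat.mod_eq_of_lt (by omega)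
      rw [hmod] at h2
      exact Or.inr ⟨by omega, by omega, h2⟩
    · rintro (⟨h0, _⟩ | ⟨_, h1, h2⟩)
      · omega
      · have hmod : a % 2^(n+1) = a - 2^(n+1) := by
          rw [Nat.mod_eq_sub_mod (le_of_not_gt hc)]
          exact Nat.mod_eq_of_lt (by omega)
        exact ⟨by omega, by rw [hmod]; exact h2⟩

lemma col_step_iii (n b : ℕ) (hge : 2^(n+2) ≤ b) :
    colS (n+2) b = colS (n+1) (b-2^(n+2)) ∪
      (colS (n+1) (pairFlip (b-2^(n+2)))).map (shiftEmb (2^(n+1))) := by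
  ext a
  have honelt : 1 < 2^(n+2) := Nat.one_lt_two_pow' (n+1)
  have hb0 : b ≠ 0 := by omega
  have hb1 : b ≠ 1 := by omega
  have hblt : ¬ b < 2^(n+2) := by omega
  have hNN : (2:ℕ)^(n+2) = 2*2^(n+1) := by ring
  simp only [colS, mem_filter, mem_range, mem_union, mem_shiftEmb_map, Sfun,
    if_neg hb0, if_neg hb1, if_neg hblt]
  by_cases hc : a < 2^(n+1)
  · simp only [if_pos hc]
    constructor
    · rintro ⟨h1, h2⟩; exact Or.inl ⟨hc, h2⟩
    · rintro (⟨_, h2⟩ | ⟨h0, _⟩)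
      · exact ⟨by omega, h2⟩
      · omega
  · simp only [if_neg hc]
    constructor
    · rintro ⟨h1, h2⟩; exact Or.inr ⟨by omega, by omega, h2⟩
    · rintro (⟨h0, _⟩ | ⟨_, h1, h2⟩)
      · omega
      · exact ⟨by omega, h2⟩

lemma pairFlip_add_even {c k : ℕ} (hk : k % 2 = 0) : pairFlip (c + k) = pairFlip c + k := by
  have h2 : (c+k) % 2 = c % 2 := by omega
  unfold pairFlip
  rw [h2]
  split_ifs with h <;> omega

/-- rows of `S r` -/
def rowset (r a : ℕ) : Finset ℕ := (range (2^(r+1)-2)).filter (fun b => Sfun r a b = 1)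

def Good (r : ℕ) : Prop :=
  (∀ b < 2^(r+1)-2, (colS r b).card = 2^(r-1)) ∧
  (∀ a < 2^r, (rowset r a).card = 2^r - 1) ∧
  (∀ b < 2^(r+1)-2, ∀ b' < 2^(r+1)-2, b ≠ b' → 4 * (colS r b ∩ colS r b').card ≤ 2^r) ∧
  (∀ b < 2^(r+1)-2, colS r b ∩ colS r (pairFlip b) = ∅)

lemma col_one (b : ℕ) (hb : b < 2) : colS 1 b = {b} := by
  ext a
  simp only [colS, mem_filter, mem_range, mem_singleton]
  simp only [Sfun]
  constructor
  · rintro ⟨h1, h2⟩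
    by_cases h : a = b
    · exact h
    · simp [h] at h2
  · rintro rfl; simp [hb]

lemma good_one : Good 1 := by
  refine ⟨?_, ?_, ?_, ?_⟩
  · intro b hb
    rw [col_one b (by norm_num at hb ⊢; omega)]
    simp
  · intro a ha
    have : rowset 1 a = {a} := by
      ext c
      simp only [rowset, mem_filter, mem_range, mem_singleton]
      simp only [Sfun]
      constructor
      · rintro ⟨h1, h2⟩
        by_cases h : a = c
        · exact h.symm
        · simp [h] at h2
      · rintro rfl
        exact ⟨by omega, by simp⟩
    rw [this]; simp
  · intro b hb b' hb' hne
    rw [col_one b (by omega), col_one b' (by omega)]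
    rw [Finset.singleton_inter_of_notMem (by simpa using hne)]
    simp
  · intro b hb
    norm_num at hb
    rw [col_one b (by omega), col_one (pairFlip b) (by unfold pairFlip; split <;> omega)]
    rw [Finset.singleton_inter_of_notMem (by simpa using (pairFlip_ne b).symm)]

lemma card_inter_rep {N : ℕ} {X1 X2 Y1 Y2 : Finset ℕ} (hX : X1 ⊆ range N) (hY : Y1 ⊆ range N) :
    ((X1 ∪ X2.map (shiftEmb N)) ∩ (Y1 ∪ Y2.map (shiftEmb N))).card
      = (X1 ∩ Y1).card + (X2 ∩ Y2).card := by
  rw [inter_union_shift hX hY, card_union_shift (inter_subset_left.trans hX)]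

/-- two-component representation of a column of `S (n+2)` -/
def colRep (n b : ℕ) : Finset ℕ × Finset ℕ :=
  if b = 0 then (range (2^(n+1)), ∅)
  else if b = 1 then (∅, range (2^(n+1)))
  else if b < 2^(n+2) then (colS (n+1) (b-2), colS (n+1) (b-2))
  else (colS (n+1) (b-2^(n+2)), colS (n+1) (pairFlip (b-2^(n+2))))

lemma col_rep (n b : ℕ) (hb : b < 2^(n+3)-2) :
    colS (n+2) b = (colRep n b).1 ∪ (colRep n b).2.map (shiftEmb (2^(n+1))) := by
  by_cases h0 : b = 0
  · subst h0; simp [colRep, col_step_zero]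
  by_cases h1 : b = 1
  · subst h1; simp [colRep, col_step_one]
  by_cases h2 : b < 2^(n+2)
  · rw [col_step_ii n b (by omega) h2]; simp [colRep, h0, h1, h2]
  · rw [col_step_iii n b (by omega)]; simp [colRep, h0, h1, h2]

lemma colRep_fst_subset (n b : ℕ) : (colRep n b).1 ⊆ range (2^(n+1)) := by
  unfold colRep
  split_ifs <;> first | exact subset_rfl | exact empty_subset _ | exact col_subset _ _

lemma colRep_zero (n : ℕ) : colRep n 0 = (range (2^(n+1)), ∅) := by simp [colRep]

lemma colRep_one (n : ℕ) : colRep n 1 = (∅, range (2^(n+1))) := by simp [colRep]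

lemma colRep_ii (n b : ℕ) (h0 : b ≠ 0) (h1 : b ≠ 1) (h2 : b < 2^(n+2)) :
    colRep n b = (colS (n+1) (b-2), colS (n+1) (b-2)) := by
  simp [colRep, h0, h1, h2]

lemma colRep_iii (n b : ℕ) (h0 : b ≠ 0) (h1 : b ≠ 1) (h2 : ¬ b < 2^(n+2)) :
    colRep n b = (colS (n+1) (b-2^(n+2)), colS (n+1) (pairFlip (b-2^(n+2)))) := by
  simp [colRep, h0, h1, h2]

lemma card_col_inter (n b b' : ℕ) (hb : b < 2^(n+3)-2) (hb' : b' < 2^(n+3)-2) :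
    (colS (n+2) b ∩ colS (n+2) b').card
      = ((colRep n b).1 ∩ (colRep n b').1).card + ((colRep n b).2 ∩ (colRep n b').2).card := by
  rw [col_rep n b hb, col_rep n b' hb',
    card_inter_rep (colRep_fst_subset n b) (colRep_fst_subset n b')]

lemma col_inter_eq (n b b' : ℕ) (hb : b < 2^(n+3)-2) (hb' : b' < 2^(n+3)-2) :
    colS (n+2) b ∩ colS (n+2) b'
      = ((colRep n b).1 ∩ (colRep n b').1) ∪
        ((colRep n b).2 ∩ (colRep n b').2).map (shiftEmb (2^(n+1))) := by
  rw [col_rep n b hb, col_rep n b' hb',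
    inter_union_shift (colRep_fst_subset n b) (colRep_fst_subset n b')]

lemma card_filter_range_add (c1 c2 : ℕ) (q : ℕ → Prop) [DecidablePred q] :
    ((range (c1+c2)).filter q).card
      = ((range c1).filter q).card + ((range c2).filter (fun x => q (x + c1))).card := by
  rw [← card_union_shift (N := c1) (filter_subset _ _)]
  congr 1
  ext a
  simp only [mem_filter, mem_range, mem_union, mem_shiftEmb_map]
  constructor
  · rintro ⟨h1, h2⟩
    by_cases h : a < c1
    · exact Or.inl ⟨h, h2⟩
    · refine Or.inr ⟨by omega, by omega, ?_⟩
      have ha : a - c1 + c1 = a := by omega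
      rw [ha]; exact h2
  · rintro (⟨h1, h2⟩ | ⟨h0, h1, h2⟩)
    · exact ⟨by omega, h2⟩
    · have ha : a - c1 + c1 = a := by omega
      rw [ha] at h2
      exact ⟨by omega, h2⟩

lemma card_filter_pairFlip (M : ℕ) (hM : M % 2 = 0) (q : ℕ → Prop) [DecidablePred q] :
    ((range M).filter (fun x => q (pairFlip x))).card = ((range M).filter q).card := by
  apply Finset.card_bij (fun x _ => pairFlip x)
  · intro x hx
    simp only [mem_filter, mem_range] at *
    exact ⟨pairFlip_lt hM hx.1, hx.2⟩
  · intro x hx y hy h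
    exact pairFlip_inj h
  · intro y hy
    simp only [mem_filter, mem_range] at hy
    exact ⟨pairFlip y, by
      simp only [mem_filter, mem_range]
      exact ⟨pairFlip_lt hM hy.1, by rw [pairFlip_invol]; exact hy.2⟩, pairFlip_invol y⟩

lemma good_step (n : ℕ) (ih : Good (n+1)) : Good (n+2) := by
  obtain ⟨ihc, ihr, ihi, ihf⟩ := ih
  have hpos : (0:ℕ) < 2^n := pow_pos (by norm_num) n
  have hpos1 : (0:ℕ) < 2^(n+1) := pow_pos (by norm_num) (n+1)
  have hN1 : (2:ℕ)^(n+1) = 2*2^n := by ring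
  have hNN : (2:ℕ)^(n+2) = 2*2^(n+1) := by ring
  have hN3 : (2:ℕ)^(n+3) = 2*2^(n+2) := by ring
  have heven : (2^(n+2)-2) % 2 = 0 := by omega
  have heven3 : (2^(n+3)-2) % 2 = 0 := by omega
  refine ⟨?_, ?_, ?_, ?_⟩
  -- column cardinalities
  · intro b hb
    rw [col_rep n b hb, card_union_shift (colRep_fst_subset n b)]
    show (colRep n b).1.card + (colRep n b).2.card = 2^(n+1)
    by_cases h0 : b = 0
    · subst h0; simp [colRep]
    by_cases h1 : b = 1
    · subst h1; simp [colRep]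
    by_cases h2 : b < 2^(n+2)
    · simp only [colRep, if_neg h0, if_neg h1, if_pos h2]
      rw [ihc (b-2) (by omega)]
      simp only [Nat.add_sub_cancel]
      omega
    · simp only [colRep, if_neg h0, if_neg h1, if_neg h2]
      rw [ihc (b-2^(n+2)) (by omega),
        ihc (pairFlip (b-2^(n+2))) (pairFlip_lt heven (by omega))]
      simp only [Nat.add_sub_cancel]
      omega
  -- row cardinalities
  · intro a ha
    have hkey : 2^(n+3)-2 = 2 + ((2^(n+2)-2) + (2^(n+2)-2)) := by omega
    rw [rowset, show (2:ℕ)^(n+2+1)-2 = 2 + ((2^(n+2)-2) + (2^(n+2)-2)) from hkey,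
      card_filter_range_add, card_filter_range_add]
    have hS0 : ((range 2).filter (fun b => Sfun (n+2) a b = 1)).card = 1 := by
      have hr2 : range 2 = {0, 1} := by decide
      rw [hr2, filter_insert, filter_singleton]
      by_cases hc : a < 2^(n+1)
      · have hq0 : Sfun (n+2) a 0 = 1 := by simp [Sfun, hc]
        have hq1 : ¬ (Sfun (n+2) a 1 = 1) := by simp [Sfun, hc]
        simp [hq0, hq1]
      · have hq0 : ¬ (Sfun (n+2) a 0 = 1) := by simp [Sfun, hc]
        have hq1 : Sfun (n+2) a 1 = 1 := by simp [Sfun, hc]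
        simp [hq0, hq1]
    have hS1 : ((range (2^(n+2)-2)).filter
        (fun x => Sfun (n+2) a (x + 2) = 1)).card = 2^(n+1) - 1 := by
      have e1 : (range (2^(n+2)-2)).filter (fun x => Sfun (n+2) a (x + 2) = 1)
          = rowset (n+1) (a % 2^(n+1)) := by
        rw [rowset]
        apply filter_congr
        intro x hx
        simp only [mem_range] at hx
        have hx0 : x + 2 ≠ 0 := by omega
        have hx1 : x + 2 ≠ 1 := by omega
        have hx2 : x + 2 < 2^(n+2) := by omega
        simp only [Sfun, if_neg hx0, if_neg hx1, if_pos hx2, Nat.add_sub_cancel]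
      rw [e1, ihr (a % 2^(n+1)) (Nat.mod_lt _ hpos1)]
    have hS2 : ((range (2^(n+2)-2)).filter
        (fun x => Sfun (n+2) a (x + (2^(n+2)-2) + 2) = 1)).card = 2^(n+1) - 1 := by
      by_cases hc : a < 2^(n+1)
      · have e2 : (range (2^(n+2)-2)).filter
            (fun x => Sfun (n+2) a (x + (2^(n+2)-2) + 2) = 1) = rowset (n+1) a := by
          rw [rowset]
          apply filter_congr
          intro x hx
          simp only [mem_range] at hx
          have hx0 : x + (2^(n+2)-2) + 2 ≠ 0 := by omega
          have hx1 : x + (2^(n+2)-2) + 2 ≠ 1 := by omega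
          have hx2 : ¬ (x + (2^(n+2)-2) + 2 < 2^(n+2)) := by omega
          have hx3 : x + (2^(n+2)-2) + 2 - 2^(n+2) = x := by omega
          simp only [Sfun, if_neg hx0, if_neg hx1, if_neg hx2, if_pos hc, hx3]
        rw [e2, ihr a hc]
      · have e2 : (range (2^(n+2)-2)).filter
            (fun x => Sfun (n+2) a (x + (2^(n+2)-2) + 2) = 1)
            = (range (2^(n+2)-2)).filter
              (fun x => Sfun (n+1) (a - 2^(n+1)) (pairFlip x) = 1) := by
          apply filter_congr
          intro x hx
          simp only [mem_range] at hx
          have hx0 : x + (2^(n+2)-2) + 2 ≠ 0 := by omega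
          have hx1 : x + (2^(n+2)-2) + 2 ≠ 1 := by omega
          have hx2 : ¬ (x + (2^(n+2)-2) + 2 < 2^(n+2)) := by omega
          have hx3 : x + (2^(n+2)-2) + 2 - 2^(n+2) = x := by omega
          simp only [Sfun, if_neg hx0, if_neg hx1, if_neg hx2, if_neg hc, hx3]
        rw [e2, card_filter_pairFlip _ heven (fun y => Sfun (n+1) (a - 2^(n+1)) y = 1),
          ← rowset, ihr (a - 2^(n+1)) (by omega)]
    rw [hS0, hS1, hS2]
    omega
  -- intersections
  · have key : ∀ c c', c < c' → c' < 2^(n+3)-2 →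
        4 * (colS (n+2) c ∩ colS (n+2) c').card ≤ 2^(n+2) := by
      intro c c' hlt hc'
      rw [card_col_inter n c c' (by omega) hc']
      by_cases hc'1 : c' = 1
      · have hc0 : c = 0 := by omega
        subst hc0; subst hc'1
        simp [colRep]
      by_cases hc'2 : c' < 2^(n+2)
      · -- c' in region ii
        have h2c' : 2 ≤ c' := by omega
        have hXsub := col_subset (n+1) (c'-2)
        have hX : (colS (n+1) (c'-2)).card = 2^n := ihc (c'-2) (by omega)
        rw [colRep_ii n c' (by omega) hc'1 hc'2]
        by_cases hc0 : c = 0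
        · subst hc0
          rw [colRep_zero]
          simp only
          rw [empty_inter, inter_eq_right.mpr hXsub, card_empty, hX]
          omega
        by_cases hc1 : c = 1
        · subst hc1
          rw [colRep_one]
          simp only
          rw [empty_inter, inter_eq_right.mpr hXsub, card_empty, hX]
          omega
        · have h2c : 2 ≤ c := by omega
          rw [colRep_ii n c hc0 hc1 (by omega)]
          simp only
          have := ihi (c-2) (by omega) (c'-2) (by omega) (by omega)
          omega
      · -- c' in region iii
        have hd' : c' - 2^(n+2) < 2^(n+2)-2 := by omega
        have hfd' : pairFlip (c' - 2^(n+2)) < 2^(n+2)-2 := pairFlip_lt heven hd'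
        have hY : (colS (n+1) (c'-2^(n+2))).card = 2^n := ihc _ hd'
        have hYf : (colS (n+1) (pairFlip (c'-2^(n+2)))).card = 2^n := ihc _ hfd'
        have hYsub := col_subset (n+1) (c'-2^(n+2))
        have hYfsub := col_subset (n+1) (pairFlip (c'-2^(n+2)))
        rw [colRep_iii n c' (by omega) hc'1 hc'2]
        by_cases hc0 : c = 0
        · subst hc0
          rw [colRep_zero]
          simp only
          rw [empty_inter, inter_eq_right.mpr hYsub, card_empty, hY]
          omega
        by_cases hc1 : c = 1
        · subst hc1
          rw [colRep_one]
          simp only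
          rw [empty_inter, inter_eq_right.mpr hYfsub, card_empty, hYf]
          omega
        by_cases hc2 : c < 2^(n+2)
        · -- c in region ii, c' in region iii
          rw [colRep_ii n c hc0 hc1 hc2]
          simp only
          set d := c - 2 with hd
          set d' := c' - 2^(n+2) with hd'e
          have hdlt : d < 2^(n+2)-2 := by omega
          by_cases hdd : d = d'
          · rw [hdd, inter_self, hY]
            rw [ihf d' hd', card_empty]
            omega
          by_cases hdf : d = pairFlip d'
          · rw [hdf, inter_comm, ihf d' hd', card_empty, inter_self, hYf]
            omega
          · have h1 := ihi d (by omega) d' hd' hdd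
            have h2 := ihi d (by omega) (pairFlip d') hfd' hdf
            omega
        · -- both in region iii
          rw [colRep_iii n c hc0 hc1 hc2]
          simp only
          have hd : c - 2^(n+2) < 2^(n+2)-2 := by omega
          have hne : c - 2^(n+2) ≠ c' - 2^(n+2) := by omega
          have h1 := ihi (c - 2^(n+2)) hd (c' - 2^(n+2)) hd' hne
          have h2 := ihi (pairFlip (c - 2^(n+2))) (pairFlip_lt heven hd)
            (pairFlip (c' - 2^(n+2))) hfd' (fun h => hne (pairFlip_inj h))
          omega
    intro b hb b' hb' hne
    rcases Nat.lt_or_ge b b' with h | h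
    · exact key b b' h hb'
    · rw [inter_comm]
      exact key b' b (by omega) hb
  -- paired columns are disjoint
  · intro b hb
    have hfb : pairFlip b < 2^(n+3)-2 := pairFlip_lt heven3 hb
    rw [col_inter_eq n b (pairFlip b) hb hfb]
    by_cases h0 : b = 0
    · subst h0
      rw [show pairFlip 0 = 1 from rfl, colRep_zero, colRep_one]
      simp
    by_cases h1 : b = 1
    · subst h1
      rw [show pairFlip 1 = 0 from rfl, colRep_zero, colRep_one]
      simp
    by_cases h2 : b < 2^(n+2)
    · have hpf : pairFlip b = pairFlip (b-2) + 2 := by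
        conv_lhs => rw [show b = (b-2) + 2 by omega]
        exact pairFlip_add_even (by omega)
      have hpfb : pairFlip (b-2) < 2^(n+2)-2 := pairFlip_lt heven (by omega)
      rw [colRep_ii n b h0 h1 h2, hpf,
        colRep_ii n (pairFlip (b-2) + 2) (by omega) (by omega) (by omega),
        Nat.add_sub_cancel]
      simp only
      rw [ihf (b-2) (by omega)]
      simp
    · have hd : b - 2^(n+2) < 2^(n+2)-2 := by omega
      have hpf : pairFlip b = pairFlip (b-2^(n+2)) + 2^(n+2) := by
        conv_lhs => rw [show b = (b-2^(n+2)) + 2^(n+2) by omega]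
        exact pairFlip_add_even (by omega)
      rw [colRep_iii n b h0 h1 h2, hpf,
        colRep_iii n (pairFlip (b-2^(n+2)) + 2^(n+2)) (by omega) (by omega) (by omega),
        Nat.add_sub_cancel, pairFlip_invol]
      simp only
      rw [ihf (b-2^(n+2)) hd, inter_comm, ihf (b-2^(n+2)) hd]
      simp

lemma good (r : ℕ) (hr : 1 ≤ r) : Good r := by
  obtain ⟨n, rfl⟩ : ∃ n, r = n + 1 := ⟨r - 1, by omega⟩
  induction n with
  | zero => exact good_one
  | succ m ihm => exact good_step m (ihm (by omega))

section Bridge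

open Finset

lemma card_filter_fin (n : ℕ) (p : ℕ → Prop) [DecidablePred p] :
    (Finset.univ.filter (fun a : Fin n => p a.val)).card = ((range n).filter p).card := by
  apply Finset.card_bij (fun a _ => a.val)
  · intro a ha
    simp only [mem_filter, mem_range, mem_univ, true_and] at *
    exact ⟨a.isLt, ha⟩
  · intro a _ a' _ h
    exact Fin.val_injective h
  · intro c hc
    simp only [mem_filter, mem_range] at hc
    exact ⟨⟨c, hc.1⟩, by simp [hc.2], rfl⟩

lemma mem_blockOf {r : ℕ} {bb : Fin (2^(r+1)-2)} {a : Fin (2^r)} :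
    a ∈ blockOf r bb ↔ Sfun r a.val bb.val = 1 := by
  unfold blockOf; rw [Finset.mem_filter]; simp [S]

lemma blockOf_card (r : ℕ) (hr : 1 ≤ r) (bb : Fin (2^(r+1)-2)) :
    (blockOf r bb).card = 2^(r-1) := by
  obtain ⟨gc, -, -, -⟩ := good r hr
  have h1 : blockOf r bb
      = Finset.univ.filter (fun a : Fin (2^r) => Sfun r a.val bb.val = 1) := by
    ext a
    simp [mem_blockOf]
  rw [h1, card_filter_fin (2^r) (fun x => Sfun r x bb.val = 1)]
  exact gc bb.val bb.isLt

lemma blockOf_inter_card (r : ℕ) (hr : 1 ≤ r) {bb bb' : Fin (2^(r+1)-2)} (h : bb ≠ bb') :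
    4 * (blockOf r bb ∩ blockOf r bb').card ≤ 2^r := by
  obtain ⟨-, -, gi, -⟩ := good r hr
  have h1 : blockOf r bb ∩ blockOf r bb' = Finset.univ.filter
      (fun a : Fin (2^r) => Sfun r a.val bb.val = 1 ∧ Sfun r a.val bb'.val = 1) := by
    ext a
    simp only [mem_inter, mem_filter, mem_univ, true_and, mem_blockOf]
  have h2 : (range (2^r)).filter (fun a => Sfun r a bb.val = 1 ∧ Sfun r a bb'.val = 1)
      = colS r bb.val ∩ colS r bb'.val := by
    ext a
    simp only [colS, mem_filter, mem_range, mem_inter]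
    tauto
  rw [h1, card_filter_fin (2^r) (fun x => Sfun r x bb.val = 1 ∧ Sfun r x bb'.val = 1), h2]
  exact gi bb.val bb.isLt bb'.val bb'.isLt (fun hh => h (Fin.val_injective hh))

lemma blockOf_row (r : ℕ) (hr : 1 ≤ r) (j : Fin (2^r)) :
    (Finset.univ.filter (fun bb : Fin (2^(r+1)-2) => j ∈ blockOf r bb)).card = 2^r - 1 := by
  obtain ⟨-, gr, -, -⟩ := good r hr
  have h1 : (Finset.univ.filter (fun bb : Fin (2^(r+1)-2) => j ∈ blockOf r bb))
      = Finset.univ.filter (fun bb : Fin (2^(r+1)-2) => Sfun r j.val bb.val = 1) := by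
    ext bb
    simp [mem_blockOf]
  rw [h1, card_filter_fin (2^(r+1)-2) (fun x => Sfun r j.val x = 1)]
  exact gr j.val j.isLt

end Bridge

section LA

open Finset

variable {𝕜 : Type*} [RCLike 𝕜] {n : Type*} [Fintype n]

lemma vecMulVec_mul_vecMulVec' (u v : n → 𝕜) :
    vecMulVec u (star u) * vecMulVec v (star v) = (star u ⬝ᵥ v) • vecMulVec u (star v) := by
  ext i j
  simp only [mul_apply, vecMulVec_apply, Matrix.smul_apply, smul_eq_mul, dotProduct, Pi.star_apply]
  rw [Finset.sum_mul]
  apply Finset.sum_congr rfl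
  intros
  ring

lemma trace_vecMulVec' (u v : n → 𝕜) : (vecMulVec u (star v)).trace = star v ⬝ᵥ u := by
  simp [Matrix.trace, Matrix.diag, vecMulVec_apply, dotProduct, mul_comm]

lemma isHermitian_vecMulVec' (u : n → 𝕜) : (vecMulVec u (star u)).IsHermitian := by
  ext i j
  simp [conjTranspose_apply, vecMulVec_apply, mul_comm]

lemma star_dotProduct'' (u v : n → 𝕜) : star (star u ⬝ᵥ v) = star v ⬝ᵥ u := by
  simp [dotProduct, mul_comm]

lemma re_mul_dot (u v : n → 𝕜) :
    RCLike.re ((star u ⬝ᵥ v) * (star v ⬝ᵥ u)) = ‖star u ⬝ᵥ v‖^2 := by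
  have h := star_dotProduct'' u v
  rw [← h, RCLike.star_def, RCLike.mul_conj]
  norm_cast

end LA

open scoped Classical in
theorem stmt19 (r : ℕ) (hr : 1 ≤ r)
    -- in the real case `r` must be even
    (hreal : (RCLike.I : 𝕜) = 0 → Even r)
    -- a maximal collection of mutually unbiased bases of `𝕜^m`, `m = 2^r`
    {K : Type*} [Fintype K]
    (b : K → Fin (2 ^ r) → (Fin (2 ^ r) → 𝕜))
    (horth : ∀ k, ∀ j j' : Fin (2 ^ r),
      star (b k j) ⬝ᵥ b k j' = if j = j' then 1 else 0)
    (hmub : ∀ k k' : K, k ≠ k' → ∀ j j' : Fin (2 ^ r),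
      ‖star (b k j) ⬝ᵥ b k' j'‖ ^ 2 = 1 / ((2 ^ r : ℕ) : ℝ))
    (hcard : (Fintype.card K : ℝ) =
      if (RCLike.I : 𝕜) = 0 then ((2 ^ r : ℕ) : ℝ) / 2 + 1 else ((2 ^ r : ℕ) : ℝ) + 1)
    -- the family of coordinate projections over the blocks of `𝕊_r`
    (P : K × Fin (2 ^ (r + 1) - 2) → Matrix (Fin (2 ^ r)) (Fin (2 ^ r)) 𝕜)
    (hP : ∀ p, P p = ∑ j ∈ blockOf r p.2, vecMulVec (b p.1 j) (star (b p.1 j))) :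
    -- `F` is a family of orthogonal projections of rank `m/2`,
    (∀ p, (P p).IsHermitian ∧ P p * P p = P p ∧ (P p).rank = 2 ^ (r - 1)) ∧
    -- consisting of `n = 2·d_𝔽(m)` members,
    Fintype.card (K × Fin (2 ^ (r + 1) - 2)) = 2 * dF 𝕜 (2 ^ r) ∧
    -- which is tight: the projections sum to a positive multiple of the identity,
    (∃ A : ℝ, 0 < A ∧
      ∑ p, P p = ((A : ℝ) : 𝕜) • (1 : Matrix (Fin (2 ^ r)) (Fin (2 ^ r)) 𝕜)) ∧
    -- and is maximal orthoplectic: `tr(P P') ≤ m/4` for distinct members, with equality attained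
    (∀ p q, p ≠ q →
      RCLike.re ((P p * P q).trace) ≤ ((2 ^ r : ℕ) : ℝ) / 4) ∧
    (∃ p q, p ≠ q ∧
      RCLike.re ((P p * P q).trace) = ((2 ^ r : ℕ) : ℝ) / 4) := by
  obtain ⟨s, rfl⟩ : ∃ s, r = s + 1 := ⟨r - 1, by omega⟩
  clear hr hreal
  have hpos : (0:ℕ) < 2^s := pow_pos (by norm_num) s
  have hm2 : (2:ℕ)^(s+1) = 2*2^s := by ring
  -- the rank-one projections
  set Q : K → Fin (2^(s+1)) → Matrix (Fin (2^(s+1))) (Fin (2^(s+1))) 𝕜 :=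
    fun k j => vecMulVec (b k j) (star (b k j)) with hQ
  -- basis matrices
  set Bm : K → Matrix (Fin (2^(s+1))) (Fin (2^(s+1))) 𝕜 :=
    fun k => Matrix.of (fun i j => b k j i) with hBm
  have hBHB : ∀ k, (Bm k)ᴴ * Bm k = 1 := by
    intro k
    ext j j'
    rw [Matrix.mul_apply]
    have h := horth k j j'
    simp only [dotProduct, Pi.star_apply] at h
    simp only [conjTranspose_apply, hBm, Matrix.of_apply, Matrix.one_apply, star]
    convert h using 2
  have hBBH : ∀ k, Bm k * (Bm k)ᴴ = 1 := fun k => mul_eq_one_comm.mp (hBHB k)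
  have hsum1 : ∀ k, ∑ j, Q k j = (1 : Matrix (Fin (2^(s+1))) (Fin (2^(s+1))) 𝕜) := by
    intro k
    rw [← hBBH k]
    ext i l
    rw [Matrix.sum_apply, Matrix.mul_apply]
    apply Finset.sum_congr rfl
    intro j _
    simp [hQ, vecMulVec_apply, conjTranspose_apply, hBm]
  -- hermitian
  have hherm : ∀ p, (P p).IsHermitian := by
    intro p
    rw [hP p]
    show conjTranspose _ = _
    rw [conjTranspose_sum]
    exact Finset.sum_congr rfl fun j _ => isHermitian_vecMulVec' _
  -- idempotent
  have hidem : ∀ p, P p * P p = P p := by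
    intro p
    rw [hP p, Finset.sum_mul_sum]
    apply Finset.sum_congr rfl
    intro j hj
    calc ∑ j' ∈ blockOf (s+1) p.2,
          vecMulVec (b p.1 j) (star (b p.1 j)) * vecMulVec (b p.1 j') (star (b p.1 j'))
        = ∑ j' ∈ blockOf (s+1) p.2,
            (if j = j' then vecMulVec (b p.1 j) (star (b p.1 j')) else 0) := by
          apply Finset.sum_congr rfl
          intro j' _
          rw [vecMulVec_mul_vecMulVec', horth, ite_smul, one_smul, zero_smul]
      _ = vecMulVec (b p.1 j) (star (b p.1 j)) := by
          rw [Finset.sum_ite_eq]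
          simp [hj]
  -- rank
  have hrank : ∀ p, (P p).rank = 2^s := by
    intro p
    have hdetmul : (Bm p.1)ᴴ.det * (Bm p.1).det = 1 := by
      have h := congrArg Matrix.det (hBHB p.1)
      rwa [Matrix.det_mul, Matrix.det_one] at h
    have hdet1 : IsUnit (Bm p.1).det :=
      isUnit_iff_exists_inv.mpr ⟨_, by rw [mul_comm] at hdetmul; exact hdetmul⟩
    have hdet2 : IsUnit ((Bm p.1)ᴴ).det := isUnit_iff_exists_inv.mpr ⟨_, hdetmul⟩
    have hfact : P p = Bm p.1 *
        Matrix.diagonal (fun j => if j ∈ blockOf (s+1) p.2 then (1:𝕜) else 0) * (Bm p.1)ᴴ := by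
      ext i l
      rw [hP p, Matrix.sum_apply, Matrix.mul_apply]
      have : ∀ j, (Bm p.1 * Matrix.diagonal
            (fun j => if j ∈ blockOf (s+1) p.2 then (1:𝕜) else 0)) i j * (Bm p.1)ᴴ j l
          = if j ∈ blockOf (s+1) p.2 then b p.1 j i * star (b p.1 j l) else 0 := by
        intro j
        rw [Matrix.mul_diagonal]
        simp only [conjTranspose_apply, hBm, Matrix.of_apply]
        split_ifs <;> ring_nf <;> simp [mul_comm]
      rw [Finset.sum_congr rfl (fun j _ => this j), Finset.sum_ite_mem, univ_inter]
      apply Finset.sum_congr rfl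
      intro j _
      simp [vecMulVec_apply]
    rw [hfact, Matrix.rank_mul_eq_left_of_isUnit_det _ _ hdet2,
      Matrix.rank_mul_eq_right_of_isUnit_det _ _ hdet1, Matrix.rank_diagonal]
    rw [Fintype.card_subtype]
    have : Finset.univ.filter
          (fun j => (if j ∈ blockOf (s+1) p.2 then (1:𝕜) else 0) ≠ 0)
        = blockOf (s+1) p.2 := by
      ext j
      by_cases h : j ∈ blockOf (s+1) p.2 <;> simp [h]
    rw [this, blockOf_card (s+1) (by omega) p.2]
    norm_num
  -- cardinality of K
  have hcardK : Fintype.card K = (if (RCLike.I : 𝕜) = 0 then 2^s + 1 else 2^(s+1) + 1) := by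
    split_ifs with hI
    · rw [if_pos hI] at hcard
      have h2 : ((Fintype.card K : ℕ) : ℝ) = ((2^s + 1 : ℕ) : ℝ) := by
        rw [hcard]
        push_cast [hm2]
        ring
      exact_mod_cast h2
    · rw [if_neg hI] at hcard
      have h2 : ((Fintype.card K : ℕ) : ℝ) = ((2^(s+1) + 1 : ℕ) : ℝ) := by
        rw [hcard]
        push_cast
        ring
      exact_mod_cast h2
  obtain ⟨t, ht⟩ : ∃ t, 2^s = t+1 := ⟨2^s - 1, by omega⟩
  -- trace formula
  have htrace : ∀ p q : K × Fin (2^(s+1+1)-2),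
      RCLike.re ((P p * P q).trace)
        = ∑ j ∈ blockOf (s+1) p.2, ∑ j' ∈ blockOf (s+1) q.2,
            ‖star (b p.1 j) ⬝ᵥ b q.1 j'‖^2 := by
    intro p q
    rw [hP p, hP q, Finset.sum_mul_sum, Matrix.trace_sum, map_sum]
    apply Finset.sum_congr rfl
    intro j _
    rw [Matrix.trace_sum, map_sum]
    apply Finset.sum_congr rfl
    intro j' _
    rw [vecMulVec_mul_vecMulVec', Matrix.trace_smul, trace_vecMulVec', smul_eq_mul]
    exact re_mul_dot _ _
  -- same basis
  have hsame : ∀ p q : K × Fin (2^(s+1+1)-2), p.1 = q.1 → p.2 ≠ q.2 →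
      RCLike.re ((P p * P q).trace) ≤ ((2^(s+1) : ℕ) : ℝ)/4 := by
    intro p q h1 h2
    rw [htrace p q]
    have hterm : ∀ j ∈ blockOf (s+1) p.2, ∀ j' ∈ blockOf (s+1) q.2,
        ‖star (b p.1 j) ⬝ᵥ b q.1 j'‖^2 = if j = j' then (1:ℝ) else 0 := by
      intro j _ j' _
      rw [← h1, horth]
      split_ifs <;> simp
    calc ∑ j ∈ blockOf (s+1) p.2, ∑ j' ∈ blockOf (s+1) q.2,
          ‖star (b p.1 j) ⬝ᵥ b q.1 j'‖^2
        = ∑ j ∈ blockOf (s+1) p.2, ∑ j' ∈ blockOf (s+1) q.2,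
            (if j = j' then (1:ℝ) else 0) := by
          apply Finset.sum_congr rfl
          intro j hj
          exact Finset.sum_congr rfl (fun j' hj' => hterm j hj j' hj')
      _ = ∑ j ∈ blockOf (s+1) p.2, (if j ∈ blockOf (s+1) q.2 then (1:ℝ) else 0) := by
          apply Finset.sum_congr rfl
          intro j _
          rw [Finset.sum_ite_eq]
      _ = ((blockOf (s+1) p.2 ∩ blockOf (s+1) q.2).card : ℝ) := by
          rw [Finset.sum_ite_mem, Finset.sum_const, nsmul_eq_mul, mul_one]
      _ ≤ ((2^(s+1) : ℕ) : ℝ)/4 := by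
          have hb := blockOf_inter_card (s+1) (by omega) h2
          have hcast : ((4 * (blockOf (s+1) p.2 ∩ blockOf (s+1) q.2).card : ℕ) : ℝ)
              ≤ ((2^(s+1) : ℕ) : ℝ) := Nat.cast_le.mpr hb
          push_cast at hcast ⊢
          linarith
  -- different bases
  have hdiff : ∀ p q : K × Fin (2^(s+1+1)-2), p.1 ≠ q.1 →
      RCLike.re ((P p * P q).trace) = ((2^(s+1) : ℕ) : ℝ)/4 := by
    intro p q h1
    rw [htrace p q]
    have hterm : ∀ j j', ‖star (b p.1 j) ⬝ᵥ b q.1 j'‖^2 = 1/((2^(s+1) : ℕ) : ℝ) :=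
      hmub p.1 q.1 h1
    calc ∑ j ∈ blockOf (s+1) p.2, ∑ j' ∈ blockOf (s+1) q.2,
          ‖star (b p.1 j) ⬝ᵥ b q.1 j'‖^2
        = ∑ j ∈ blockOf (s+1) p.2, ∑ j' ∈ blockOf (s+1) q.2, 1/((2^(s+1) : ℕ) : ℝ) := by
          apply Finset.sum_congr rfl
          intro j _
          exact Finset.sum_congr rfl (fun j' _ => hterm j j')
      _ = ((2:ℝ)^s) * ((2:ℝ)^s * (1/((2^(s+1) : ℕ) : ℝ))) := by
          rw [Finset.sum_const, Finset.sum_const, blockOf_card (s+1) (by omega),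
            blockOf_card (s+1) (by omega)]
          simp only [Nat.add_sub_cancel, nsmul_eq_mul]
          push_cast
          ring
      _ = ((2^(s+1) : ℕ) : ℝ)/4 := by
          have hne : ((2:ℝ))^s ≠ 0 := by positivity
          have : ((2^(s+1) : ℕ) : ℝ) = 2 * (2:ℝ)^s := by
            push_cast [hm2]
            ring
          rw [this]
          field_simp
          ring
  refine ⟨fun p => ⟨hherm p, hidem p, hrank p⟩, ?_, ?_, ?_, ?_⟩
  -- cardinality
  · rw [Fintype.card_prod, Fintype.card_fin, dF]
    have h1 : (2:ℕ)^(s+1) = 2*t+2 := by rw [hm2, ht]; ring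
    have h2 : (2:ℕ)^(s+1+1) - 2 = 4*t+2 := by
      rw [show (2:ℕ)^(s+1+1) = 2*2^(s+1) from by ring, h1]
      omega
    rw [hcardK, h2]
    split_ifs with hI
    · rw [show (2:ℕ)^s + 1 = t + 2 from by omega, h1,
        show (2*t+2) - 1 = 2*t+1 from by omega,
        show (2*t+2+2)*(2*t+1) = 2*((t+2)*(2*t+1)) from by ring,
        Nat.mul_div_cancel_left _ (by norm_num : (0:ℕ) < 2)]
      ring
    · rw [show (2:ℕ)^(s+1)+1 = 2*t+3 from by omega, h1,
        show (2*t+2)^2 = 4*t^2+8*t+4 from by ring,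
        show 4*t^2+8*t+4 - 1 = 4*t^2+8*t+3 from by omega]
      ring
  -- tightness
  · refine ⟨((Fintype.card K * (2^(s+1) - 1) : ℕ) : ℝ), ?_, ?_⟩
    · have hK1 : 0 < Fintype.card K := by rw [hcardK]; split_ifs <;> omega
      have : 0 < Fintype.card K * (2^(s+1) - 1) := Nat.mul_pos hK1 (by omega)
      exact_mod_cast this
    · have hstep : ∑ p : K × Fin (2^(s+1+1)-2), P p
          = (Fintype.card K * (2^(s+1) - 1) : ℕ)
              • (1 : Matrix (Fin (2^(s+1))) (Fin (2^(s+1))) 𝕜) := by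
        rw [Fintype.sum_prod_type]
        have hinner : ∀ k, ∑ b2 : Fin (2^(s+1+1)-2), P (k, b2)
            = (2^(s+1) - 1 : ℕ) • (1 : Matrix (Fin (2^(s+1))) (Fin (2^(s+1))) 𝕜) := by
          intro k
          calc ∑ b2 : Fin (2^(s+1+1)-2), P (k, b2)
              = ∑ b2 : Fin (2^(s+1+1)-2), ∑ j ∈ blockOf (s+1) b2, Q k j :=
                Finset.sum_congr rfl (fun b2 _ => hP (k, b2))
            _ = ∑ b2 : Fin (2^(s+1+1)-2), ∑ j : Fin (2^(s+1)),
                  (if j ∈ blockOf (s+1) b2 then Q k j else 0) := by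
                apply Finset.sum_congr rfl
                intro b2 _
                rw [Finset.sum_ite_mem, univ_inter]
            _ = ∑ j : Fin (2^(s+1)), ∑ b2 : Fin (2^(s+1+1)-2),
                  (if j ∈ blockOf (s+1) b2 then Q k j else 0) := Finset.sum_comm
            _ = ∑ j : Fin (2^(s+1)), (2^(s+1) - 1 : ℕ) • Q k j := by
                apply Finset.sum_congr rfl
                intro j _
                rw [← Finset.sum_filter, Finset.sum_const, blockOf_row (s+1) (by omega) j]
            _ = (2^(s+1) - 1 : ℕ) • ∑ j, Q k j := by rw [Finset.smul_sum]
            _ = (2^(s+1) - 1 : ℕ) • (1 : Matrix (Fin (2^(s+1))) (Fin (2^(s+1))) 𝕜) := by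
                rw [hsum1 k]
        rw [Finset.sum_congr rfl (fun k _ => hinner k), Finset.sum_const, Finset.card_univ,
          smul_smul]
      rw [hstep]
      rw [RCLike.ofReal_natCast, Nat.cast_smul_eq_nsmul]
  -- orthoplectic bound
  · intro p q hpq
    by_cases h1 : p.1 = q.1
    · have h2 : p.2 ≠ q.2 := by
        intro h2
        exact hpq (Prod.ext h1 h2)
      exact hsame p q h1 h2
    · exact le_of_eq (hdiff p q h1)
  -- equality attained
  · have h2K : 1 < Fintype.card K := by
      rw [hcardK]
      have h1le : (1:ℕ) ≤ 2^s := hpos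
      have h1le2 : (0:ℕ) < 2^(s+1) := pow_pos (by norm_num) (s+1)
      split_ifs <;> omega
    obtain ⟨k, k', hkk'⟩ := Fintype.exists_pair_of_one_lt_card h2K
    have hj0 : 0 < 2^(s+1+1) - 2 := by
      have : (2:ℕ)^(s+1+1) = 4*2^s := by ring
      omega
    refine ⟨(k, ⟨0, hj0⟩), (k', ⟨0, hj0⟩), ?_, ?_⟩
    · intro h
      exact hkk' (congrArg Prod.fst h)
    · exact hdiff _ _ hkk'

end
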